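/- arXiv:1809.08709 — 2 statements merged into one kernel-verified Lean document; each statement's English description precedes it below -/
import Mathlib

section
/- Let L be a symmetric Laplacian matrix (L1 = 0, L ⪰ 0, simple zero eigenvalue) and let ζ₀, ζ₂, α be real scalars with α ≠ 0. Suppose that for every u ∈ ℝⁿ with 1ᵀu = 0 the linear system α u = (ζ₀ I + ζ₂ L) w has a solution w. Then for x* minimizing f(x) = (1/n)Σᵢ fᵢ(x) (each fᵢ : ℝ → ℝ differentiable, with Σᵢ fᵢ'(x*) = 0), there exists an optimal fixed point of the canonical-form iteration: namely points x_i* = x*, v_{1i}* = 0, u_i* = fᵢ'(x*), and w* ∈ ℝⁿ with α u* = ζ₀ w* + ζ₂ L w*, v₂* = L w*, such that all update equations (C.1)–(C.6) are stationary. -/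
/-- Existence of an optimal fixed point of the canonical form. -/
theorem stmt2 {n : ℕ} (L : Matrix (Fin n) (Fin n) ℝ)
    (hsym : L.IsSymm) (hpsd : L.PosSemidef)
    (hL1 : L.mulVec (fun _ => (1 : ℝ)) = 0)
    (hker : ∀ x : Fin n → ℝ, L.mulVec x = 0 → ∀ i j, x i = x j)
    (α ζ₀ ζ₁ ζ₂ ζ₃ : ℝ) (hα : α ≠ 0)
    (hT2 : ∀ u : Fin n → ℝ, (∑ i, u i) = 0 →
      ∃ w : Fin n → ℝ, α • u = ζ₀ • w + ζ₂ • L.mulVec w)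
    (f : Fin n → ℝ → ℝ) (hf : ∀ i, Differentiable ℝ (f i))
    (xstar : ℝ) (hopt : ∑ i, deriv (f i) xstar = 0) :
    ∃ x w v₁ v₂ y u : Fin n → ℝ,
      (∀ i, y i = xstar) ∧
      v₁ = L.mulVec x ∧
      v₂ = L.mulVec w ∧
      y = x - ζ₃ • v₁ ∧
      (∀ i, u i = deriv (f i) (y i)) ∧
      x = x + ζ₀ • w - α • u - ζ₁ • v₁ + ζ₂ • v₂ ∧
      w = w - v₁ := by
  set x : Fin n → ℝ := fun _ => xstar with hx
  have hxs : x = xstar • (fun _ => (1 : ℝ)) := by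
    funext i; simp [hx]
  have hLx : L.mulVec x = 0 := by
    rw [hxs, Matrix.mulVec_smul, hL1, smul_zero]
  set u : Fin n → ℝ := fun i => deriv (f i) xstar with hu
  obtain ⟨w, hw⟩ := hT2 u hopt
  refine ⟨x, w, 0, L.mulVec w, x, u, fun i => rfl, hLx.symm, rfl, by simp, fun i => rfl, ?_, by simp⟩
  have : ζ₀ • w + ζ₂ • L.mulVec w - α • u = 0 := by rw [← hw]; abel
  calc x = x + (ζ₀ • w + ζ₂ • L.mulVec w - α • u) - ζ₁ • (0 : Fin n → ℝ) := by
          rw [this]; simp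
    _ = x + ζ₀ • w - α • u - ζ₁ • (0 : Fin n → ℝ) + ζ₂ • L.mulVec w := by abel
end

section
/- Consider the canonical-form iteration with parameters α ≠ 0, ζ₀, ζ₁, ζ₂, ζ₃ and symmetric connected Laplacian L, and assume either ζ₀ = 0 or 1ᵀw⁰ = 0. If (x*, w*, v₁*, v₂*, y*, u*) is any fixed point of the iteration (with uᵢ* = fᵢ'(yᵢ*)), then all yᵢ* are equal to a common value ȳ and Σᵢ fᵢ'(ȳ) = 0, i.e., ȳ is a stationary point of the average objective. -/
/-- All fixed points of the canonical form are optimal. -/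
theorem stmt3 {n : ℕ} (L : Matrix (Fin n) (Fin n) ℝ)
    (hsym : L.IsSymm)
    (hL1 : L.mulVec (fun _ => (1 : ℝ)) = 0)
    (hker : ∀ z : Fin n → ℝ, L.mulVec z = 0 → ∀ i j, z i = z j)
    (α ζ₀ ζ₁ ζ₂ ζ₃ : ℝ) (hα : α ≠ 0)
    (f : Fin n → ℝ → ℝ) (hf : ∀ i, Differentiable ℝ (f i))
    (x w v₁ v₂ y u : Fin n → ℝ)
    (hT3 : ζ₀ = 0 ∨ (∑ i, w i) = 0)
    (hv₁ : v₁ = L.mulVec x)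
    (hv₂ : v₂ = L.mulVec w)
    (hy : y = x - ζ₃ • v₁)
    (hu : ∀ i, u i = deriv (f i) (y i))
    (hxfix : x = x + ζ₀ • w - α • u - ζ₁ • v₁ + ζ₂ • v₂)
    (hwfix : w = w - v₁) :
    ∃ ybar : ℝ, (∀ i, y i = ybar) ∧ ∑ i, deriv (f i) ybar = 0 := by
  -- v₁ = 0
  have hv10 : v₁ = 0 := by
    funext i
    have := congrFun hwfix i
    simp [Pi.sub_apply] at this
    simp only [Pi.zero_apply]; linarith
  have hLx : L.mulVec x = 0 := hv10 ▸ hv₁.symm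
  have hyx : y = x := by simp [hy, hv10]
  -- column sums of L vanish
  have hcol : ∀ j, (∑ i, L i j) = 0 := by
    intro j
    have := congrFun hL1 j
    simp [Matrix.mulVec, dotProduct] at this
    calc (∑ i, L i j) = ∑ i, L j i := by
          refine Finset.sum_congr rfl fun i _ => ?_
          exact Matrix.IsSymm.apply hsym j i
      _ = 0 := this
  -- sum of v₂ vanishes
  have hsv2 : (∑ i, v₂ i) = 0 := by
    rw [hv₂]
    simp only [Matrix.mulVec, dotProduct]
    rw [Finset.sum_comm]
    simp [← Finset.sum_mul, hcol]
  -- from x fixed point: α • u = ζ₀ • w + ζ₂ • v₂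
  have hequ : ∀ i, α * u i = ζ₀ * w i + ζ₂ * v₂ i := by
    intro i
    have := congrFun hxfix i
    simp [Pi.add_apply, Pi.sub_apply, hv10] at this
    linarith
  have hsumu : (∑ i, u i) = 0 := by
    have h1 : α * (∑ i, u i) = ζ₀ * (∑ i, w i) + ζ₂ * (∑ i, v₂ i) := by
      rw [Finset.mul_sum, Finset.mul_sum, Finset.mul_sum, ← Finset.sum_add_distrib]
      exact Finset.sum_congr rfl fun i _ => hequ i
    rw [hsv2, mul_zero, add_zero] at h1
    rcases hT3 with h | h
    · rw [h, zero_mul] at h1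
      exact (mul_eq_zero.mp h1).resolve_left hα
    · rw [h, mul_zero] at h1
      exact (mul_eq_zero.mp h1).resolve_left hα
  rcases Nat.eq_zero_or_pos n with hn | hn
  · exact ⟨0, fun i => absurd i.2 (by omega), by subst hn; simp⟩
  · have i0 : Fin n := ⟨0, hn⟩
    refine ⟨y i0, fun i => ?_, ?_⟩
    · rw [hyx]; exact hker x hLx i i0
    · have hyeq : ∀ i, y i = y i0 := fun i => by rw [hyx]; exact hker x hLx i i0
      calc (∑ i, deriv (f i) (y i0)) = ∑ i, u i := by
            refine Finset.sum_congr rfl fun i _ => ?_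
            rw [hu i, hyeq i]
        _ = 0 := hsumu
end
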